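/- Let P ⊆ ℝ^d be a polytope, F a nonempty exposed face of P with F ≠ P, and a ∈ ℝ^d, b ∈ ℝ such that every extreme point v of P satisfies ⟨a,v⟩ < b if v ∈ F and ⟨a,v⟩ > b if v ∉ F; put Q = P ∩ {x : ⟨a,x⟩ ≥ b}. Assume moreover that the truncation is parallel, i.e., ⟨a,·⟩ is constant on F. Then for every extreme point u of P contained in F, N(P,u) = ⋃_w N(Q, u + t_w (w − u)), where the union is over all extreme points w of P with w ∉ F such that the segment [u,w] is an exposed face of P (i.e., w is adjacent to u), and t_w = (b − ⟨a,u⟩)/(⟨a,w⟩ − ⟨a,u⟩), so that u + t_w(w − u) is the intersection point of the edge [u,w] with the truncating hyperplane {x : ⟨a,x⟩ = b}. -/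

import Mathlib

/-- The standard inner product on `ℝ^d`. -/
def dotp {d : ℕ} (u v : Fin d → ℝ) : ℝ := ∑ t, u t * v t

/-- The normal cone of `X ⊆ ℝ^d` at a point `v`. -/
def normalCone {d : ℕ} (X : Set (Fin d → ℝ)) (v : Fin d → ℝ) : Set (Fin d → ℝ) :=
  {u | ∀ y ∈ X, dotp u y ≤ dotp u v}

namespace Stmt11
variable {d : ℕ}

lemma dotp_add_right (m x y : Fin d → ℝ) : dotp m (x + y) = dotp m x + dotp m y := by
  simp [dotp, mul_add, Finset.sum_add_distrib]

lemma dotp_smul_right (m : Fin d → ℝ) (r : ℝ) (x : Fin d → ℝ) :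
    dotp m (r • x) = r * dotp m x := by
  simp [dotp, Finset.mul_sum]; exact Finset.sum_congr rfl fun i _ => by ring

lemma dotp_sub_right (m x y : Fin d → ℝ) : dotp m (x - y) = dotp m x - dotp m y := by
  simp [dotp, mul_sub, Finset.sum_sub_distrib]

lemma dotp_add_left (m n x : Fin d → ℝ) : dotp (m + n) x = dotp m x + dotp n x := by
  simp [dotp, add_mul, Finset.sum_add_distrib]

lemma dotp_sub_left (m n x : Fin d → ℝ) : dotp (m - n) x = dotp m x - dotp n x := by
  simp [dotp, sub_mul, Finset.sum_sub_distrib]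

lemma dotp_smul_left (r : ℝ) (m x : Fin d → ℝ) : dotp (r • m) x = r * dotp m x := by
  simp [dotp, Finset.mul_sum]; exact Finset.sum_congr rfl fun i _ => by ring

lemma dotp_self_nonneg (x : Fin d → ℝ) : 0 ≤ dotp x x :=
  Finset.sum_nonneg fun i _ => mul_self_nonneg _

lemma eq_of_dotp_self_sub (x y : Fin d → ℝ) (h : dotp (x - y) (x - y) = 0) : x = y := by
  funext i
  have h2 : ∀ j ∈ Finset.univ, 0 ≤ (x j - y j) * (x j - y j) := fun j _ => mul_self_nonneg _
  have := (Finset.sum_eq_zero_iff_of_nonneg h2).1 (by simpa [dotp] using h) i (Finset.mem_univ i)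
  have := mul_self_eq_zero.1 this
  linarith

/-- `dotp m ·` as a linear map. -/
def dotL (m : Fin d → ℝ) : (Fin d → ℝ) →ₗ[ℝ] ℝ where
  toFun x := dotp m x
  map_add' x y := dotp_add_right m x y
  map_smul' r x := by simpa [smul_eq_mul] using dotp_smul_right m r x

/-- `dotp m ·` as a continuous linear map. -/
noncomputable def dotCLM (m : Fin d → ℝ) : (Fin d → ℝ) →L[ℝ] ℝ :=
  LinearMap.toContinuousLinearMap (dotL m)

@[simp] lemma dotCLM_apply (m x : Fin d → ℝ) : dotCLM m x = dotp m x := rfl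

/-- Every continuous linear functional is a `dotp`. -/
lemma exists_dotp_eq (f : (Fin d → ℝ) →L[ℝ] ℝ) : ∃ g, ∀ x, dotp g x = f x := by
  refine ⟨fun i => f (fun j => if i = j then 1 else 0), fun x => ?_⟩
  have := LinearMap.pi_apply_eq_sum_univ (f : (Fin d → ℝ) →ₗ[ℝ] ℝ) x
  simp only [ContinuousLinearMap.coe_coe] at this
  rw [this, dotp]
  exact Finset.sum_congr rfl fun i _ => by rw [smul_eq_mul, mul_comm]


/-- dotp of a finite convex combination. -/
lemma dotp_centerMass (m : Fin d → ℝ) (T : Finset (Fin d → ℝ)) (w : (Fin d → ℝ) → ℝ)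
    (y : Fin d → ℝ) (hy : ∑ v ∈ T, w v • v = y) :
    dotp m y = ∑ v ∈ T, w v * dotp m v := by
  subst hy
  induction T using Finset.induction with
  | empty => simp [dotp]
  | insert _ _ hx ih =>
      rw [Finset.sum_insert hx, Finset.sum_insert hx, dotp_add_right, dotp_smul_right, ih]

/-- Linear bound on a convex hull of a finite set. -/
lemma dotp_le_on_convexHull {X : Set (Fin d → ℝ)} (hX : X.Finite) {m : Fin d → ℝ} {r : ℝ}
    (hb : ∀ v ∈ X, dotp m v ≤ r) {y : Fin d → ℝ} (hy : y ∈ convexHull ℝ X) :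
    dotp m y ≤ r := by
  rw [← hX.coe_toFinset, Finset.mem_convexHull'] at hy
  obtain ⟨w, hw0, hw1, hwy⟩ := hy
  rw [dotp_centerMass m _ w y hwy]
  calc ∑ v ∈ hX.toFinset, w v * dotp m v ≤ ∑ v ∈ hX.toFinset, w v * r := by
        refine Finset.sum_le_sum fun v hv => ?_
        exact mul_le_mul_of_nonneg_left (hb v (hX.mem_toFinset.1 hv)) (hw0 v hv)
    _ = r := by rw [← Finset.sum_mul, hw1, one_mul]

/-- If a linear functional attains its max on the hull, the point is in the hull
of the maximizers. -/
lemma mem_convexHull_support {X : Set (Fin d → ℝ)} (hX : X.Finite) (m : Fin d → ℝ) (r : ℝ)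
    (hb : ∀ v ∈ X, dotp m v ≤ r) {y : Fin d → ℝ} (hy : y ∈ convexHull ℝ X)
    (heq : r ≤ dotp m y) :
    y ∈ convexHull ℝ {v ∈ X | dotp m v = r} := by
  rw [← hX.coe_toFinset, Finset.mem_convexHull'] at hy
  obtain ⟨w, hw0, hw1, hwy⟩ := hy
  have hsum : dotp m y = ∑ v ∈ hX.toFinset, w v * dotp m v := dotp_centerMass m _ w y hwy
  have hzero : ∀ v ∈ hX.toFinset, w v * (r - dotp m v) = 0 := by
    have hnn : ∀ v ∈ hX.toFinset, 0 ≤ w v * (r - dotp m v) := fun v hv =>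
      mul_nonneg (hw0 v hv) (sub_nonneg.2 (hb v (hX.mem_toFinset.1 hv)))
    have htot : ∑ v ∈ hX.toFinset, w v * (r - dotp m v) = 0 := by
      have : ∑ v ∈ hX.toFinset, w v * (r - dotp m v)
          = r - dotp m y := by
        rw [hsum]
        simp [mul_sub, Finset.sum_sub_distrib, ← Finset.sum_mul, hw1]
      have h0 : r - dotp m y ≤ 0 := by linarith
      have h1 : 0 ≤ ∑ v ∈ hX.toFinset, w v * (r - dotp m v) := Finset.sum_nonneg hnn
      linarith [this]
    exact (Finset.sum_eq_zero_iff_of_nonneg hnn).1 htot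
  set T' := hX.toFinset.filter (fun v => dotp m v = r) with hT'
  have hwz : ∀ v ∈ hX.toFinset, v ∉ T' → w v = 0 := by
    intro v hv hvT
    rcases mul_eq_zero.1 (hzero v hv) with h | h
    · exact h
    · exact absurd (by rw [hT', Finset.mem_filter]; exact ⟨hv, by linarith⟩) hvT
  have hsub : T' ⊆ hX.toFinset := Finset.filter_subset _ _
  have hy' : y ∈ convexHull ℝ (T' : Set (Fin d → ℝ)) := by
    rw [Finset.mem_convexHull']
    refine ⟨w, fun v hv => hw0 v (hsub hv), ?_, ?_⟩
    · rw [← hw1]; exact Finset.sum_subset hsub (fun v hv hvn => hwz v hv hvn)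
    · rw [← hwy]; exact Finset.sum_subset hsub (fun v hv hvn => by rw [hwz v hv hvn, zero_smul])
  refine convexHull_mono ?_ hy'
  intro v hv
  rw [hT'] at hv
  simp only [Finset.coe_filter, Set.mem_setOf_eq] at hv
  exact ⟨hX.mem_toFinset.1 hv.1, hv.2⟩

/-- A finite nonempty set has a point not in the hull of the others. -/
lemma exists_not_mem_convexHull_diff {A : Set (Fin d → ℝ)} (hA : A.Finite) (hne : A.Nonempty) :
    ∃ e ∈ A, e ∉ convexHull ℝ (A \ {e}) := by
  obtain ⟨e, heA, hemax⟩ := hA.toFinset.exists_max_image (fun x => dotp x x)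
    (by rwa [← Set.Finite.toFinset_nonempty hA] at hne)
  rw [hA.mem_toFinset] at heA
  refine ⟨e, heA, fun hmem => ?_⟩
  have hfin : (A \ {e}).Finite := hA.subset Set.diff_subset
  rw [← hfin.coe_toFinset, Finset.mem_convexHull'] at hmem
  obtain ⟨w, hw0, hw1, hwy⟩ := hmem
  have hkey : ∀ v ∈ hfin.toFinset, dotp e v ≤ dotp e e := by
    intro v hv
    rw [hfin.mem_toFinset] at hv
    have h1 : 0 ≤ dotp (e - v) (e - v) := dotp_self_nonneg _
    rw [dotp_sub_left, dotp_sub_right, dotp_sub_right] at h1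
    have h2 : dotp v v ≤ dotp e e := hemax v (hA.mem_toFinset.2 hv.1)
    have h3 : dotp v e = dotp e v := by simp [dotp, mul_comm]
    nlinarith
  have hsum : dotp e e = ∑ v ∈ hfin.toFinset, w v * dotp e v := dotp_centerMass e _ w e hwy
  have hzero : ∀ v ∈ hfin.toFinset, w v * (dotp e e - dotp e v) = 0 := by
    have hnn : ∀ v ∈ hfin.toFinset, 0 ≤ w v * (dotp e e - dotp e v) := fun v hv =>
      mul_nonneg (hw0 v hv) (sub_nonneg.2 (hkey v hv))
    refine (Finset.sum_eq_zero_iff_of_nonneg hnn).1 ?_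
    rw [Finset.sum_congr rfl (fun v _ => mul_sub (w v) (dotp e e) (dotp e v)),
      Finset.sum_sub_distrib, ← Finset.sum_mul, hw1, one_mul, ← hsum, sub_self]
  obtain ⟨v, hvmem, hvpos⟩ : ∃ v ∈ hfin.toFinset, 0 < w v := by
    by_contra h
    push_neg at h
    have : ∑ v ∈ hfin.toFinset, w v = 0 :=
      Finset.sum_eq_zero fun v hv => le_antisymm (h v hv) (hw0 v hv)
    rw [hw1] at this; norm_num at this
  have hveq : dotp e v = dotp e e := by
    rcases mul_eq_zero.1 (hzero v hvmem) with h | h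
    · exact absurd h (ne_of_gt hvpos)
    · linarith
  rw [hfin.mem_toFinset] at hvmem
  have hvv : dotp v v = dotp e e := by
    have h1 : 0 ≤ dotp (e - v) (e - v) := dotp_self_nonneg _
    rw [dotp_sub_left, dotp_sub_right, dotp_sub_right] at h1
    have h3 : dotp v e = dotp e v := by simp [dotp, mul_comm]
    have h2 : dotp v v ≤ dotp e e := hemax v (hA.mem_toFinset.2 hvmem.1)
    nlinarith
  have : e = v := by
    apply eq_of_dotp_self_sub
    rw [dotp_sub_left, dotp_sub_right, dotp_sub_right]
    have h3 : dotp v e = dotp e v := by simp [dotp, mul_comm]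
    linarith
  exact hvmem.2 (by rw [← this]; rfl)

/-- Strict separation of a point from the hull of a finite set. -/
lemma exists_sep {T : Set (Fin d → ℝ)} (hT : T.Finite) {e : Fin d → ℝ}
    (he : e ∉ convexHull ℝ T) : ∃ g, ∀ x ∈ T, dotp g x < dotp g e := by
  rcases T.eq_empty_or_nonempty with rfl | hne
  · exact ⟨0, fun x hx => absurd hx (Set.notMem_empty x)⟩
  obtain ⟨l, r, hl, hr⟩ := geometric_hahn_banach_closed_point
    (convex_convexHull ℝ T) (hT.isClosed_convexHull ℝ) he
  obtain ⟨g, hg⟩ := exists_dotp_eq l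
  exact ⟨g, fun x hx => by
    rw [hg, hg]; exact lt_trans (hl x (subset_convexHull ℝ T hx)) hr⟩

end Stmt11

open Stmt11 in
set_option maxHeartbeats 1000000 in
/-- for a parallel truncation `Q = P ∩ {x : ⟨a,x⟩ ≥ b}` of a polytope
`P` in a proper nonempty exposed face `G` (with `⟨a,·⟩` constant on `G`), the normal
cone of `P` at any extreme point `u ∈ G` is the union, over the extreme points `w ∉ G`
adjacent to `u`, of the normal cones of `Q` at the intersection points of the edges
`[u,w]` with the truncating hyperplane. -/
theorem stmt_11 (d : ℕ) (V : Set (Fin d → ℝ)) (hV : V.Finite) (hVne : V.Nonempty)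
    (P : Set (Fin d → ℝ)) (hP : P = convexHull ℝ V)
    (G : Set (Fin d → ℝ)) (hG : IsExposed ℝ P G) (hGne : G.Nonempty) (hGP : G ≠ P)
    (a : Fin d → ℝ) (b : ℝ)
    (hsep : ∀ v ∈ P.extremePoints ℝ,
      (v ∈ G → dotp a v < b) ∧ (v ∉ G → b < dotp a v))
    (hpar : ∀ x ∈ G, ∀ y ∈ G, dotp a x = dotp a y)
    (Q : Set (Fin d → ℝ)) (hQ : Q = P ∩ {x | b ≤ dotp a x}) :
    ∀ u ∈ P.extremePoints ℝ, u ∈ G →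
      normalCone P u =
        {z | ∃ w, w ∈ P.extremePoints ℝ ∧ w ∉ G ∧ IsExposed ℝ P (segment ℝ u w) ∧
          z ∈ normalCone Q
            (u + ((b - dotp a u) / (dotp a w - dotp a u)) • (w - u))} := by
  intro u huX huG
  set X := P.extremePoints ℝ with hXdef
  have hPconv : Convex ℝ P := hP ▸ convex_convexHull ℝ V
  have hPcomp : IsCompact P := hP ▸ hV.isCompact_convexHull ℝ
  have hXsubV : X ⊆ V := by rw [hXdef, hP]; exact extremePoints_convexHull_subset
  have hXfin : X.Finite := hV.subset hXsubV
  have hXP : X ⊆ P := extremePoints_subset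
  have hPX : P = convexHull ℝ X := by
    have h1 := closure_convexHull_extremePoints hPcomp hPconv
    rw [← hXdef] at h1
    rw [← h1, (hXfin.isClosed_convexHull ℝ).closure_eq]
  have hGsub : G ⊆ P := hG.subset
  have hGconv : Convex ℝ G := hG.convex hPconv
  have huP : u ∈ P := hXP huX
  have hcb : dotp a u < b := (hsep u huX).1 huG
  have haG : ∀ v ∈ G, dotp a v = dotp a u := fun v hv => hpar v hv u huG
  have haN : ∀ v ∈ X, v ∉ G → b < dotp a v := fun v hv hvG => (hsep v hv).2 hvG
  have hNne : ∃ w₀, w₀ ∈ X ∧ w₀ ∉ G := by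
    by_contra h
    push_neg at h
    refine hGP (Set.Subset.antisymm hGsub ?_)
    rw [hPX]
    exact convexHull_min (fun v hv => h v hv) hGconv
  -- membership in Q
  have hQmem : ∀ y, y ∈ Q ↔ y ∈ P ∧ b ≤ dotp a y := fun y => by rw [hQ]; rfl
  ext z
  simp only [Set.mem_setOf_eq]
  constructor
  · -- hard direction
    intro hz
    have hzu : ∀ y ∈ P, dotp z y ≤ dotp z u := hz
    obtain ⟨w₀, hw₀X, hw₀G⟩ := hNne
    have hNfin : (X \ G).Finite := hXfin.subset Set.diff_subset
    obtain ⟨w₁, hw₁N, hw₁max⟩ := Set.exists_max_image (X \ G)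
      (fun v => (dotp z v - dotp z u) / (dotp a v - dotp a u)) hNfin ⟨w₀, hw₀X, hw₀G⟩
    set τ := (dotp z w₁ - dotp z u) / (dotp a w₁ - dotp a u) with hτdef
    have hdenom : ∀ v ∈ X, v ∉ G → 0 < dotp a v - dotp a u := by
      intro v hv hvG; have := haN v hv hvG; linarith
    have hτ : ∀ v ∈ X, v ∉ G → dotp z v - dotp z u ≤ τ * (dotp a v - dotp a u) := by
      intro v hv hvG
      have hd := hdenom v hv hvG
      have h1 := hw₁max v ⟨hv, hvG⟩
      calc dotp z v - dotp z u
          = ((dotp z v - dotp z u) / (dotp a v - dotp a u)) * (dotp a v - dotp a u) := by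
            field_simp
        _ ≤ τ * (dotp a v - dotp a u) := mul_le_mul_of_nonneg_right h1 (le_of_lt hd)
    have hτ0 : τ ≤ 0 := by
      rw [hτdef]
      apply div_nonpos_iff.2
      refine Or.inr ⟨?_, le_of_lt (hdenom w₁ hw₁N.1 hw₁N.2)⟩
      have := hzu w₁ (hXP hw₁N.1); linarith
    set ζ := z - τ • a with hζdef
    have hζv : ∀ v, dotp ζ v = dotp z v - τ * dotp a v := fun v => by
      rw [hζdef, dotp_sub_left, dotp_smul_left]
    have hζle : ∀ v ∈ X, dotp ζ v ≤ dotp ζ u := by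
      intro v hv
      by_cases hvG : v ∈ G
      · rw [hζv, hζv, haG v hvG]
        have := hzu v (hXP hv); linarith
      · rw [hζv, hζv]
        have := hτ v hv hvG; linarith
    have hζw₁ : dotp ζ w₁ = dotp ζ u := by
      rw [hζv, hζv]
      have hd := hdenom w₁ hw₁N.1 hw₁N.2
      have : τ * (dotp a w₁ - dotp a u) = dotp z w₁ - dotp z u := by
        rw [hτdef]; field_simp
      linarith
    set S := {v ∈ X | dotp ζ v = dotp ζ u} with hSdef
    have hSX : S ⊆ X := fun v hv => hv.1
    have hSfin : S.Finite := hXfin.subset hSX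
    have huS : u ∈ S := ⟨huX, rfl⟩
    have hw₁S : w₁ ∈ S := ⟨hw₁N.1, hζw₁⟩
    have hw₁u : w₁ ≠ u := fun h => hw₁N.2 (h ▸ huG)
    set D := (fun v => v - u) '' (S \ {u}) with hDdef
    have hDfin : D.Finite := (hSfin.subset Set.diff_subset).image _
    -- u not in hull of other extreme points of S
    have hu_not : u ∉ convexHull ℝ (S \ {u}) := by
      intro hmem
      have hsub2 : S \ {u} ⊆ P := fun v hv => hXP (hSX hv.1)
      have hhull : convexHull ℝ (S \ {u}) ⊆ P := convexHull_min hsub2 hPconv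
      have hue : u ∈ (convexHull ℝ (S \ {u})).extremePoints ℝ := by
        refine mem_extremePoints.2 ⟨hmem, fun x₁ h₁ x₂ h₂ h => ?_⟩
        exact ⟨huX.2 (hhull h₁) (hhull h₂) h, huX.2 (hhull h₂) (hhull h₁) (openSegment_symm ℝ x₁ x₂ ▸ h)⟩
      exact (extremePoints_convexHull_subset hue).2 rfl
    have h0D : (0 : Fin d → ℝ) ∉ convexHull ℝ D := by
      intro h0
      set f := (AffineEquiv.constVAdd ℝ (Fin d → ℝ) (-u)).toAffineMap with hfdef
      have himg : D = ⇑f '' (S \ {u}) := by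
        rw [hDdef]
        refine Set.image_congr fun v _ => ?_
        simp [hfdef, AffineEquiv.constVAdd_apply, neg_add_eq_sub]
      rw [himg, ← AffineMap.image_convexHull] at h0
      obtain ⟨y, hy, hy0⟩ := h0
      have hyu : y = u := by
        have h' : -u + y = 0 := by
          simpa [hfdef, AffineEquiv.constVAdd_apply] using hy0
        rw [neg_add_eq_sub, sub_eq_zero] at h'
        exact h'
      exact hu_not (hyu ▸ hy)
    obtain ⟨ℓ₀, hℓ₀⟩ := exists_sep hDfin h0D
    have hℓ₀D : ∀ x ∈ D, dotp ℓ₀ x < 0 := by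
      intro x hx
      have := hℓ₀ x hx
      simpa [dotp] using this
    set nf : (Fin d → ℝ) → (Fin d → ℝ) := fun x => (-dotp ℓ₀ x)⁻¹ • x with hnf
    set D' := nf '' D with hD'def
    have hD'fin : D'.Finite := hDfin.image _
    have hx₁D : w₁ - u ∈ D := ⟨w₁, ⟨hw₁S, hw₁u⟩, rfl⟩
    have hD'ne : D'.Nonempty := ⟨nf (w₁ - u), Set.mem_image_of_mem _ hx₁D⟩
    obtain ⟨e, heD', hemax⟩ := Set.exists_max_image D' (fun x => dotp a x) hD'fin hD'ne
    have hae : 0 < dotp a e := by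
      have h1 : 0 < -dotp ℓ₀ (w₁ - u) := by linarith [hℓ₀D _ hx₁D]
      have h2 : 0 < dotp a (w₁ - u) := by
        rw [dotp_sub_right]; exact hdenom w₁ hw₁N.1 hw₁N.2
      have h3 : dotp a (nf (w₁ - u)) = (-dotp ℓ₀ (w₁ - u))⁻¹ * dotp a (w₁ - u) := by
        rw [hnf]; exact dotp_smul_right a _ _
      have h4 := hemax (nf (w₁ - u)) (Set.mem_image_of_mem _ hx₁D)
      have h5 : 0 < (-dotp ℓ₀ (w₁ - u))⁻¹ * dotp a (w₁ - u) :=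
        mul_pos (inv_pos.2 h1) h2
      linarith [h3 ▸ h5]
    set A := {x ∈ D' | dotp a x = dotp a e} with hAdef
    have hAfin : A.Finite := hD'fin.subset fun x hx => hx.1
    obtain ⟨e₁, he₁A, he₁⟩ := exists_not_mem_convexHull_diff hAfin ⟨e, heD', rfl⟩
    obtain ⟨g, hg⟩ := exists_sep (hAfin.subset Set.diff_subset) he₁
    have hae₁ : dotp a e₁ = dotp a e := he₁A.2
    -- κ
    set ratio : (Fin d → ℝ) → ℝ := fun x => (dotp g x - dotp g e₁) / (dotp a e₁ - dotp a x)
      with hratio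
    set κ : ℝ := 1 + ∑ x ∈ hD'fin.toFinset, max 0 (ratio x) with hκdef
    have hκpos : 0 < κ := by
      rw [hκdef]
      have : 0 ≤ ∑ x ∈ hD'fin.toFinset, max 0 (ratio x) :=
        Finset.sum_nonneg fun x _ => le_max_left _ _
      linarith
    have hκbig : ∀ x ∈ D', ratio x < κ := by
      intro x hx
      have h1 : max 0 (ratio x) ≤ ∑ y ∈ hD'fin.toFinset, max 0 (ratio y) :=
        Finset.single_le_sum (f := fun y => max 0 (ratio y)) (fun y _ => le_max_left _ _)
          (hD'fin.mem_toFinset.2 hx)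
      have h2 : ratio x ≤ max 0 (ratio x) := le_max_right _ _
      rw [hκdef]; linarith
    set ℓ₁ := κ • a + g with hℓ₁def
    have hℓ₁v : ∀ x, dotp ℓ₁ x = κ * dotp a x + dotp g x := fun x => by
      rw [hℓ₁def, dotp_add_left, dotp_smul_left]
    have hℓ₁lt : ∀ x ∈ D', x ≠ e₁ → dotp ℓ₁ x < dotp ℓ₁ e₁ := by
      intro x hx hxe
      rw [hℓ₁v, hℓ₁v]
      by_cases hxA : x ∈ A
      · have h1 : dotp a x = dotp a e₁ := by rw [hxA.2, hae₁]
        have h2 : dotp g x < dotp g e₁ := by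
          have := hg x ⟨hxA, hxe⟩
          exact this
        rw [h1]; linarith
      · have h1 : dotp a x < dotp a e₁ := by
          rw [hae₁]
          exact lt_of_le_of_ne (hemax x hx) (fun h => hxA ⟨hx, h⟩)
        have h2 := hκbig x hx
        rw [hratio] at h2
        have h3 : dotp g x - dotp g e₁ < κ * (dotp a e₁ - dotp a x) := by
          rw [div_lt_iff₀ (by linarith)] at h2
          linarith [h2]
        nlinarith
    set ℓ := ℓ₁ + dotp ℓ₁ e₁ • ℓ₀ with hℓdef
    have hℓv : ∀ x, dotp ℓ x = dotp ℓ₁ x + dotp ℓ₁ e₁ * dotp ℓ₀ x := fun x => by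
      rw [hℓdef, dotp_add_left, dotp_smul_left]
    have hℓD : ∀ x ∈ D, dotp ℓ x ≤ 0 ∧ (dotp ℓ x = 0 ↔ nf x = e₁) := by
      intro x hx
      have hβ : 0 < -dotp ℓ₀ x := by linarith [hℓ₀D x hx]
      have hxβ : x = (-dotp ℓ₀ x) • nf x := by
        rw [hnf]
        rw [smul_inv_smul₀ (ne_of_gt hβ)]
      have hnfD' : nf x ∈ D' := Set.mem_image_of_mem _ hx
      have hℓx : dotp ℓ x = (-dotp ℓ₀ x) * (dotp ℓ₁ (nf x) - dotp ℓ₁ e₁) := by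
        nth_rewrite 1 [hxβ]
        rw [hℓv, dotp_smul_right]
        have hℓ₀x : dotp ℓ₀ ((-dotp ℓ₀ x) • nf x) = dotp ℓ₀ x := by rw [← hxβ]
        rw [hℓ₀x]; ring
      constructor
      · rw [hℓx]
        by_cases hxe : nf x = e₁
        · rw [hxe]; simp
        · have := hℓ₁lt (nf x) hnfD' hxe
          nlinarith
      · rw [hℓx]
        constructor
        · intro h
          rcases mul_eq_zero.1 h with h' | h'
          · linarith
          · by_contra hne
            have := hℓ₁lt (nf x) hnfD' hne
            linarith
        · intro h; rw [h]; ring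
    -- R and w
    have he₁D' : e₁ ∈ D' := he₁A.1
    obtain ⟨x₂, hx₂D, hx₂e⟩ := he₁D'
    set R := {x ∈ D | nf x = e₁} with hRdef
    have hRfin : R.Finite := hDfin.subset fun x hx => hx.1
    have hRne : R.Nonempty := ⟨x₂, hx₂D, hx₂e⟩
    obtain ⟨wh, hwhR, hwhmax⟩ := Set.exists_max_image R (fun x => -dotp ℓ₀ x) hRfin hRne
    have hwhD : wh ∈ D := hwhR.1
    have hwhβ : 0 < -dotp ℓ₀ wh := by linarith [hℓ₀D wh hwhD]
    have hwhe : wh = (-dotp ℓ₀ wh) • e₁ := by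
      rw [← hwhR.2, hnf, smul_inv_smul₀ (ne_of_gt hwhβ)]
    obtain ⟨w', hw'S, hw'eq⟩ := hwhD
    set w := w' with hwdef
    have hwu : w - u = wh := hw'eq
    have hwS : w ∈ S := hw'S.1
    have hwX : w ∈ X := hSX hwS
    have haw : dotp a w - dotp a u = (-dotp ℓ₀ wh) * dotp a e₁ := by
      rw [← dotp_sub_right, hwu]
      nth_rewrite 1 [hwhe]
      rw [dotp_smul_right]
    have hawpos : 0 < dotp a w - dotp a u := by
      rw [haw, hae₁]
      exact mul_pos hwhβ hae
    have hwG : w ∉ G := by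
      intro hwG
      have := haG w hwG
      linarith
    have hwb : b < dotp a w := haN w hwX hwG
    refine ⟨w, hwX, hwG, ?_, ?_⟩
    · -- exposedness of segment u w
      obtain ⟨ε, hε0, hεp⟩ : ∃ ε : ℝ, 0 < ε ∧
          ∀ v ∈ X, v ∉ S → dotp ζ v + ε * (dotp ℓ v - dotp ℓ u) < dotp ζ u := by
        by_cases hT : (X \ S).Nonempty
        · obtain ⟨v₀, hv₀, hv₀min⟩ := Set.exists_min_image (X \ S)
            (fun v => (dotp ζ u - dotp ζ v) / (|dotp ℓ v - dotp ℓ u| + 1))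
            (hXfin.subset Set.diff_subset) hT
          have hgap : ∀ v ∈ X, v ∉ S → 0 < dotp ζ u - dotp ζ v := by
            intro v hv hvS
            have h1 := hζle v hv
            have h2 : dotp ζ v ≠ dotp ζ u := fun h => hvS ⟨hv, h⟩
            cases lt_or_eq_of_le h1 with
            | inl h => linarith
            | inr h => exact absurd h h2
          have hDpos : ∀ v : Fin d → ℝ, (0:ℝ) < |dotp ℓ v - dotp ℓ u| + 1 := fun v => by
            positivity
          refine ⟨(dotp ζ u - dotp ζ v₀) / (|dotp ℓ v₀ - dotp ℓ u| + 1),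
            div_pos (hgap v₀ hv₀.1 hv₀.2) (hDpos v₀), ?_⟩
          intro v hv hvS
          set ε := (dotp ζ u - dotp ζ v₀) / (|dotp ℓ v₀ - dotp ℓ u| + 1) with hεdef
          have hε0 : 0 < ε := div_pos (hgap v₀ hv₀.1 hv₀.2) (hDpos v₀)
          have h2 : ε ≤ (dotp ζ u - dotp ζ v) / (|dotp ℓ v - dotp ℓ u| + 1) :=
            hv₀min v ⟨hv, hvS⟩
          have h3 : ε * (|dotp ℓ v - dotp ℓ u| + 1) ≤ dotp ζ u - dotp ζ v := by
            rw [← le_div_iff₀ (hDpos v)]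
            exact h2
          have h4 : ε * (dotp ℓ v - dotp ℓ u) ≤ ε * |dotp ℓ v - dotp ℓ u| :=
            mul_le_mul_of_nonneg_left (le_abs_self _) (le_of_lt hε0)
          have h5 : ε * |dotp ℓ v - dotp ℓ u| < ε * (|dotp ℓ v - dotp ℓ u| + 1) :=
            mul_lt_mul_of_pos_left (lt_add_one _) hε0
          linarith
        · refine ⟨1, one_pos, fun v hv hvS => absurd ⟨v, hv, hvS⟩ hT⟩
      set m := ζ + ε • ℓ with hmdef
      have hmv : ∀ x, dotp m x = dotp ζ x + ε * dotp ℓ x := fun x => by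
        rw [hmdef, dotp_add_left, dotp_smul_left]
      have hℓwh : dotp ℓ wh = 0 := (hℓD wh hwhR.1).2.2 hwhR.2
      have hmle : ∀ v ∈ X, dotp m v ≤ dotp m u := by
        intro v hv
        by_cases hvS : v ∈ S
        · by_cases hvu : v = u
          · rw [hvu]
          · have hvD : v - u ∈ D := ⟨v, ⟨hvS, hvu⟩, rfl⟩
            have h1 : dotp ℓ (v - u) ≤ 0 := (hℓD _ hvD).1
            rw [dotp_sub_right] at h1
            rw [hmv, hmv, hvS.2]
            nlinarith
        · have := hεp v hv hvS
          rw [hmv, hmv]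
          linarith
      have hmw : dotp m w = dotp m u := by
        have h1 : dotp ℓ w - dotp ℓ u = 0 := by
          rw [← dotp_sub_right, hwu, hℓwh]
        rw [hmv, hmv, hwS.2]
        nlinarith
      intro _
      refine ⟨dotCLM m, ?_⟩
      ext x
      simp only [Set.mem_setOf_eq, dotCLM_apply]
      constructor
      · rintro ⟨α, β, hα, hβ, hαβ, hx⟩
        have hxP : x ∈ P := hx ▸ hPconv huP (hXP hwX) hα hβ hαβ
        refine ⟨hxP, fun y hy => ?_⟩
        have h1 : dotp m y ≤ dotp m u := dotp_le_on_convexHull hXfin hmle (hPX ▸ hy)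
        have h2 : dotp m x = dotp m u := by
          rw [← hx, dotp_add_right, dotp_smul_right, dotp_smul_right, hmw]
          linear_combination dotp m u * hαβ
        linarith
      · rintro ⟨hxP, hxmax⟩
        have h1 : dotp m x = dotp m u :=
          le_antisymm (dotp_le_on_convexHull hXfin hmle (hPX ▸ hxP)) (hxmax u huP)
        have hsupp : x ∈ convexHull ℝ {v ∈ X | dotp m v = dotp m u} :=
          mem_convexHull_support hXfin m _ hmle (hPX ▸ hxP) (le_of_eq h1.symm)
        have hsub : {v ∈ X | dotp m v = dotp m u} ⊆ segment ℝ u w := by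
          rintro v ⟨hvX, hvm⟩
          by_cases hvu : v = u
          · rw [hvu]; exact left_mem_segment ℝ u w
          have hvS : v ∈ S := by
            by_contra hvS
            have := hεp v hvX hvS
            rw [hmv, hmv] at hvm
            linarith
          have hvD : v - u ∈ D := ⟨v, ⟨hvS, hvu⟩, rfl⟩
          have hℓveq : dotp ℓ (v - u) = 0 := by
            rw [hmv, hmv, hvS.2] at hvm
            have h2 : ε * dotp ℓ v = ε * dotp ℓ u := by linarith
            have h3 : dotp ℓ v = dotp ℓ u := mul_left_cancel₀ (ne_of_gt hε0) h2
            rw [dotp_sub_right]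
            linarith
          have hnfv : nf (v - u) = e₁ := (hℓD _ hvD).2.1 hℓveq
          have hβv : 0 < -dotp ℓ₀ (v - u) := by linarith [hℓ₀D _ hvD]
          have hveq : v - u = (-dotp ℓ₀ (v - u)) • e₁ := by
            rw [← hnfv, hnf, smul_inv_smul₀ (ne_of_gt hβv)]
          have hlecoef : -dotp ℓ₀ (v - u) ≤ -dotp ℓ₀ wh := hwhmax _ ⟨hvD, hnfv⟩
          set s := (-dotp ℓ₀ (v - u)) / (-dotp ℓ₀ wh) with hsdef
          have hs0 : 0 < s := div_pos hβv hwhβ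
          have hs1 : s ≤ 1 := (div_le_one hwhβ).2 hlecoef
          refine ⟨1 - s, s, by linarith, le_of_lt hs0, by ring, ?_⟩
          have hveq2 : v - u = s • (w - u) := by
            rw [hwu]
            nth_rewrite 1 [hwhe]
            rw [smul_smul, hsdef, div_mul_cancel₀ _ (ne_of_gt hwhβ)]
            exact hveq
          have : v = u + s • (w - u) := by
            rw [← hveq2]
            module
          rw [this]
          module
        exact convexHull_min hsub (convex_segment u w) hsupp
    · -- z ∈ normalCone Q p
      intro y hy
      rw [hQmem] at hy
      have h1 : dotp ζ y ≤ dotp ζ u := dotp_le_on_convexHull hXfin hζle (hPX ▸ hy.1)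
      rw [hζv, hζv] at h1
      have h2 : dotp z y ≤ dotp z u + τ * (dotp a y - dotp a u) := by linarith
      have h3 : τ * (dotp a y - dotp a u) ≤ τ * (b - dotp a u) :=
        mul_le_mul_of_nonpos_left (by linarith [hy.2]) hτ0
      have hwSτ : dotp z w - dotp z u = τ * (dotp a w - dotp a u) := by
        have := hwS.2
        rw [hζv, hζv] at this
        linarith
      have hp : dotp z (u + ((b - dotp a u) / (dotp a w - dotp a u)) • (w - u))
          = dotp z u + ((b - dotp a u) / (dotp a w - dotp a u)) * (dotp z w - dotp z u) := by
        rw [dotp_add_right, dotp_smul_right, dotp_sub_right]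
      rw [hp, hwSτ]
      have : ((b - dotp a u) / (dotp a w - dotp a u)) * (τ * (dotp a w - dotp a u))
          = τ * (b - dotp a u) := by
        field_simp
      rw [this]
      linarith
  · -- easy direction
    rintro ⟨w, hwX, hwG, -, hz⟩
    have hwb : b < dotp a w := haN w hwX hwG
    have hden : 0 < dotp a w - dotp a u := by linarith
    set t := (b - dotp a u) / (dotp a w - dotp a u) with htdef
    have ht0 : 0 < t := div_pos (by linarith) hden
    have ht1 : t < 1 := (div_lt_one hden).2 (by linarith)
    set p := u + t • (w - u) with hpdef
    have hwP : w ∈ P := hXP hwX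
    have hpP : p ∈ P := by
      have hpeq : p = (1 - t) • u + t • w := by rw [hpdef]; module
      rw [hpeq]
      exact hPconv huP hwP (by linarith) (le_of_lt ht0) (by ring)
    have hap : dotp a p = b := by
      rw [hpdef, dotp_add_right, dotp_smul_right, dotp_sub_right, htdef]
      field_simp
      ring
    have hpQ : p ∈ Q := (hQmem p).2 ⟨hpP, le_of_eq hap.symm⟩
    have hwQ : w ∈ Q := (hQmem w).2 ⟨hwP, le_of_lt hwb⟩
    have hzp : dotp z p = dotp z u + t * (dotp z w - dotp z u) := by
      rw [hpdef, dotp_add_right, dotp_smul_right, dotp_sub_right]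
    have h1 : dotp z w ≤ dotp z p := hz w hwQ
    have h2 : dotp z w ≤ dotp z u := by nlinarith
    have h3 : dotp z p ≤ dotp z u := by nlinarith
    have hext : ∀ v ∈ X, dotp z v ≤ dotp z u := by
      intro v hvX
      by_cases hvG : v ∈ G
      · have hav : dotp a v = dotp a u := haG v hvG
        set q := v + t • (w - v) with hqdef
        have hqP : q ∈ P := by
          have hqeq : q = (1 - t) • v + t • w := by rw [hqdef]; module
          rw [hqeq]
          exact hPconv (hXP hvX) hwP (by linarith) (le_of_lt ht0) (by ring)
        have haq : dotp a q = b := by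
          rw [hqdef, dotp_add_right, dotp_smul_right, dotp_sub_right, hav, htdef]
          field_simp
          ring
        have hqQ : q ∈ Q := (hQmem q).2 ⟨hqP, le_of_eq haq.symm⟩
        have h4 : dotp z q ≤ dotp z p := hz q hqQ
        have h5 : dotp z q = dotp z v + t * (dotp z w - dotp z v) := by
          rw [hqdef, dotp_add_right, dotp_smul_right, dotp_sub_right]
        nlinarith
      · have hvQ : v ∈ Q := (hQmem v).2 ⟨hXP hvX, le_of_lt (haN v hvX hvG)⟩
        exact le_trans (hz v hvQ) h3
    intro y hyP
    exact dotp_le_on_convexHull hXfin hext (hPX ▸ hyP)
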